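/- Given B ∈ ℝ^{n×m} and positive integers n, m with b = n/m ∈ ℕ, the matrix Y* = B − (1/n)·1ₙ1ₙᵀB + (1/m)·(1ₙ − B1ₘ + (1/n)·1ₙ1ₙᵀB1ₘ)·1ₘᵀ is the unique solution of the problem min_Y (1/2)‖Y − B‖_F² subject to 1ₙᵀY = b·1ₘᵀ and Y·1ₘ = 1ₙ; i.e., Y* is the orthogonal projection of B onto the affine set {Y : 1ₙᵀY = b·1ₘᵀ, Y·1ₘ = 1ₙ}. -/

import Mathlib

/-- explicit formula for the orthogonal projection of `B` onto the
affine set `{Y : 1ₙᵀY = b·1ₘᵀ, Y·1ₘ = 1ₙ}`: `Y*` is feasible and is the unique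
minimizer of the Frobenius distance to `B`. -/
theorem stmt_12 (n m : ℕ) (hn : 0 < n) (hm : 0 < m) (b : ℕ) (hb : n = m * b)
    (B : Matrix (Fin n) (Fin m) ℝ)
    (Ystar : Matrix (Fin n) (Fin m) ℝ)
    (hY : ∀ i j, Ystar i j
      = B i j - (1 / (n : ℝ)) * ∑ i', B i' j
        + (1 / (m : ℝ)) * (1 - ∑ j', B i j' + (1 / (n : ℝ)) * ∑ i', ∑ j', B i' j')) :
    ((∀ j, ∑ i, Ystar i j = (b : ℝ)) ∧ (∀ i, ∑ j, Ystar i j = 1)) ∧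
    ∀ Y : Matrix (Fin n) (Fin m) ℝ,
      (∀ j, ∑ i, Y i j = (b : ℝ)) → (∀ i, ∑ j, Y i j = 1) →
      (∑ i, ∑ j, (Ystar i j - B i j) ^ 2 ≤ ∑ i, ∑ j, (Y i j - B i j) ^ 2) ∧
      (Y ≠ Ystar → ∑ i, ∑ j, (Ystar i j - B i j) ^ 2 < ∑ i, ∑ j, (Y i j - B i j) ^ 2) := by
  have hn' : (n : ℝ) ≠ 0 := Nat.cast_ne_zero.mpr hn.ne'
  have hm' : (m : ℝ) ≠ 0 := Nat.cast_ne_zero.mpr hm.ne'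
  have hnm : (n : ℝ) = (m : ℝ) * (b : ℝ) := by rw [hb]; push_cast; ring
  set S : ℝ := ∑ i', ∑ j', B i' j' with hS
  -- column sums of Ystar
  have hcol : ∀ j, ∑ i, Ystar i j = (b : ℝ) := by
    intro j
    have h1 : ∑ i, Ystar i j
        = ∑ i, (B i j - (1 / (n : ℝ)) * ∑ i', B i' j
          + (1 / (m : ℝ)) * (1 - ∑ j', B i j' + (1 / (n : ℝ)) * S)) :=
      Finset.sum_congr rfl fun i _ => hY i j
    rw [h1, Finset.sum_add_distrib, Finset.sum_sub_distrib]
    have e1 : ∑ _x : Fin n, (1 / (n : ℝ)) * ∑ i', B i' j = ∑ i', B i' j := by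
      rw [Finset.sum_const]
      simp only [Finset.card_univ, Fintype.card_fin, nsmul_eq_mul]
      field_simp
    have e2 : ∑ x : Fin n, (1 / (m : ℝ)) * (1 - ∑ j', B x j' + (1 / (n : ℝ)) * S) = (b : ℝ) := by
      rw [← Finset.mul_sum, Finset.sum_add_distrib, Finset.sum_sub_distrib,
        Finset.sum_const, Finset.sum_const]
      have hSrows : ∑ i : Fin n, ∑ j', B i j' = S := rfl
      rw [hSrows]
      simp only [Finset.card_univ, Fintype.card_fin, nsmul_eq_mul]
      field_simp
      rw [hnm]; ring
    rw [e1, e2]; ring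
  -- row sums of Ystar
  have hrow : ∀ i, ∑ j, Ystar i j = 1 := by
    intro i
    have h1 : ∑ j, Ystar i j
        = ∑ j, (B i j - (1 / (n : ℝ)) * ∑ i', B i' j
          + (1 / (m : ℝ)) * (1 - ∑ j', B i j' + (1 / (n : ℝ)) * S)) :=
      Finset.sum_congr rfl fun j _ => hY i j
    rw [h1, Finset.sum_add_distrib, Finset.sum_sub_distrib]
    have e1 : ∑ j : Fin m, (1 / (n : ℝ)) * ∑ i', B i' j = (1 / (n : ℝ)) * S := by
      rw [← Finset.mul_sum]
      congr 1
      rw [hS, Finset.sum_comm]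
    have e2 : ∑ _x : Fin m,
        (1 / (m : ℝ)) * (1 - ∑ j', B i j' + (1 / (n : ℝ)) * S)
        = 1 - ∑ j', B i j' + (1 / (n : ℝ)) * S := by
      rw [Finset.sum_const]
      simp only [Finset.card_univ, Fintype.card_fin, nsmul_eq_mul]
      field_simp
    rw [e1, e2]; ring
  refine ⟨⟨hcol, hrow⟩, ?_⟩
  intro Y hYcol hYrow
  -- key decomposition
  have key : ∑ i, ∑ j, (Y i j - B i j) ^ 2
      = ∑ i, ∑ j, (Ystar i j - B i j) ^ 2 + ∑ i, ∑ j, (Y i j - Ystar i j) ^ 2 := by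
    -- D i j = a i + d j
    set a : Fin n → ℝ := fun i => (1 / (m : ℝ)) * (1 - ∑ j', B i j' + (1 / (n : ℝ)) * S) with ha
    set d : Fin m → ℝ := fun j => -(1 / (n : ℝ)) * ∑ i', B i' j with hd
    have hD : ∀ i j, Ystar i j - B i j = a i + d j := by
      intro i j; rw [hY i j]; simp [ha, hd]; ring
    have hErow : ∀ i, ∑ j, (Y i j - Ystar i j) = 0 := by
      intro i; rw [Finset.sum_sub_distrib, hYrow i, hrow i]; ring
    have hEcol : ∀ j, ∑ i, (Y i j - Ystar i j) = 0 := by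
      intro j; rw [Finset.sum_sub_distrib, hYcol j, hcol j]; ring
    have cross : ∑ i, ∑ j, (Ystar i j - B i j) * (Y i j - Ystar i j) = 0 := by
      have h1 : ∀ i, ∑ j, (Ystar i j - B i j) * (Y i j - Ystar i j)
          = a i * ∑ j, (Y i j - Ystar i j) + ∑ j, d j * (Y i j - Ystar i j) := by
        intro i
        rw [Finset.mul_sum, ← Finset.sum_add_distrib]
        exact Finset.sum_congr rfl fun j _ => by rw [hD i j]; ring
      have h2 : ∑ i, ∑ j, (Ystar i j - B i j) * (Y i j - Ystar i j)
          = ∑ i, ∑ j, d j * (Y i j - Ystar i j) := by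
        rw [Finset.sum_congr rfl fun i _ => h1 i, Finset.sum_add_distrib]
        have : ∀ i ∈ Finset.univ, a i * ∑ j, (Y i j - Ystar i j) = 0 := by
          intro i _; rw [hErow i]; ring
        rw [Finset.sum_congr rfl this]; simp
      rw [h2, Finset.sum_comm]
      refine Finset.sum_eq_zero fun j _ => ?_
      rw [← Finset.mul_sum, hEcol j]; ring
    have expand : ∀ i j, (Y i j - B i j) ^ 2
        = (Ystar i j - B i j) ^ 2 + (Y i j - Ystar i j) ^ 2
          + 2 * ((Ystar i j - B i j) * (Y i j - Ystar i j)) := by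
      intro i j; ring
    calc ∑ i, ∑ j, (Y i j - B i j) ^ 2
        = ∑ i, ∑ j, ((Ystar i j - B i j) ^ 2 + (Y i j - Ystar i j) ^ 2
            + 2 * ((Ystar i j - B i j) * (Y i j - Ystar i j))) :=
          Finset.sum_congr rfl fun i _ => Finset.sum_congr rfl fun j _ => expand i j
      _ = ∑ i, ∑ j, (Ystar i j - B i j) ^ 2 + ∑ i, ∑ j, (Y i j - Ystar i j) ^ 2
            + 2 * ∑ i, ∑ j, ((Ystar i j - B i j) * (Y i j - Ystar i j)) := by
          simp only [Finset.sum_add_distrib, Finset.mul_sum]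
      _ = _ := by rw [cross]; ring
  constructor
  · rw [key]
    have : (0:ℝ) ≤ ∑ i, ∑ j, (Y i j - Ystar i j) ^ 2 :=
      Finset.sum_nonneg fun i _ => Finset.sum_nonneg fun j _ => sq_nonneg _
    linarith
  · intro hne
    rw [key]
    have hpos : (0:ℝ) < ∑ i, ∑ j, (Y i j - Ystar i j) ^ 2 := by
      obtain ⟨i, j, hij⟩ : ∃ i j, Y i j ≠ Ystar i j := by
        by_contra h
        push_neg at h
        exact hne (by ext i j; exact h i j)
      have hne' : Y i j - Ystar i j ≠ 0 := sub_ne_zero.mpr hij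
      have h1 : (0:ℝ) < (Y i j - Ystar i j) ^ 2 := by positivity
      exact Finset.sum_pos'
        (fun i _ => Finset.sum_nonneg fun j _ => sq_nonneg _)
        ⟨i, Finset.mem_univ i,
          Finset.sum_pos' (fun j _ => sq_nonneg _) ⟨j, Finset.mem_univ j, h1⟩⟩
    linarith
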